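/- Let $F_0, F_1$ solve $F_0' = (d_0+\nu_{01})F_0 - \nu_{01} F_1$, $F_1' = -\nu_{10} F_0 + \nu_{10} F_1$ on $[0,T]$ with $F_0(T) = F_1(T) = 1$, where $d_0, \nu_{01}, \nu_{10} > 0$, and let $F_2(t) = e^{-d_0(T-t)}$. Then for all $t \in [0,T)$, $F_1(t) > F_0(t) > F_2(t)$. -/

import Mathlib

open Set intervalIntegral

theorem stmt2 (d0 ν01 ν10 T : ℝ)
    (hd0 : 0 < d0) (h01 : 0 < ν01) (h10 : 0 < ν10) (hT : 0 < T)
    (F0 F1 : ℝ → ℝ)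
    (hODE0 : ∀ t ∈ Set.Icc (0:ℝ) T, HasDerivAt F0 ((d0 + ν01) * F0 t - ν01 * F1 t) t)
    (hODE1 : ∀ t ∈ Set.Icc (0:ℝ) T, HasDerivAt F1 (-ν10 * F0 t + ν10 * F1 t) t)
    (hterm0 : F0 T = 1) (hterm1 : F1 T = 1) :
    ∀ t ∈ Set.Ico (0:ℝ) T, F1 t > F0 t ∧ F0 t > Real.exp (-d0 * (T - t)) := by
  set ν := ν01 + ν10 with hν
  set E : ℝ → ℝ := fun s => Real.exp (-d0 * (T - s)) with hE
  set G : ℝ → ℝ := fun s => F1 s - F0 s with hG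
  set H : ℝ → ℝ := fun s => F0 s - E s with hH
  have hEpos : ∀ s, 0 < E s := fun s => Real.exp_pos _
  have hGT : G T = 0 := by simp [hG, hterm0, hterm1]
  have hHT : H T = 0 := by simp [hH, hE, hterm0]
  have hcF0 : ContinuousOn F0 (Set.Icc 0 T) := fun s hs =>
    (hODE0 s hs).continuousAt.continuousWithinAt
  have hcF1 : ContinuousOn F1 (Set.Icc 0 T) := fun s hs =>
    (hODE1 s hs).continuousAt.continuousWithinAt
  have hcE : Continuous E := by
    simp only [hE]; fun_prop
  have hcG : ContinuousOn G (Set.Icc 0 T) := hcF1.sub hcF0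
  have hcH : ContinuousOn H (Set.Icc 0 T) := hcF0.sub hcE.continuousOn
  -- derivative of E
  have hEd : ∀ s : ℝ, HasDerivAt E (d0 * E s) s := by
    intro s
    have h1 : HasDerivAt (fun u : ℝ => -d0 * (T - u)) d0 s := by
      simpa using ((hasDerivAt_id s).const_sub T).const_mul (-d0)
    simpa [hE, mul_comm] using h1.exp
  -- derivative of the φ auxiliary function
  have hφ : ∀ s ∈ Set.Icc (0:ℝ) T,
      HasDerivAt (fun u => Real.exp (-ν * u) * G u) (-(d0 * Real.exp (-ν * s) * F0 s)) s := by
    intro s hs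
    have h1 : HasDerivAt (fun u : ℝ => Real.exp (-ν * u)) (Real.exp (-ν * s) * (-ν)) s := by
      simpa using ((hasDerivAt_id s).const_mul (-ν)).exp
    have h2 : HasDerivAt G
        ((-ν10 * F0 s + ν10 * F1 s) - ((d0 + ν01) * F0 s - ν01 * F1 s)) s :=
      (hODE1 s hs).sub (hODE0 s hs)
    have : HasDerivAt (fun u => Real.exp (-ν * u) * G u) _ s := h1.mul h2
    convert this using 1
    simp only [hG, hν]; ring
  -- derivative of the ψ auxiliary function
  have hψ : ∀ s ∈ Set.Icc (0:ℝ) T,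
      HasDerivAt (fun u => Real.exp (-d0 * u) * H u) (-(ν01 * Real.exp (-d0 * s) * G s)) s := by
    intro s hs
    have h1 : HasDerivAt (fun u : ℝ => Real.exp (-d0 * u)) (Real.exp (-d0 * s) * (-d0)) s := by
      simpa using ((hasDerivAt_id s).const_mul (-d0)).exp
    have h2 : HasDerivAt H
        (((d0 + ν01) * F0 s - ν01 * F1 s) - d0 * E s) s :=
      (hODE0 s hs).sub (hEd s)
    have : HasDerivAt (fun u => Real.exp (-d0 * u) * H u) _ s := h1.mul h2
    convert this using 1
    simp only [hG, hH]; ring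
  -- integral identity for G
  have key1 : ∀ a ∈ Set.Icc (0:ℝ) T,
      Real.exp (-ν * a) * G a = ∫ s in a..T, d0 * Real.exp (-ν * s) * F0 s := by
    intro a ha
    have hsub : Set.uIcc a T ⊆ Set.Icc 0 T := by
      rw [Set.uIcc_of_le ha.2]; exact Set.Icc_subset_Icc ha.1 le_rfl
    have hcont : ContinuousOn (fun s => d0 * Real.exp (-ν * s) * F0 s) (Set.uIcc a T) :=
      ((continuousOn_const.mul
        ((Real.continuous_exp.comp (continuous_const.mul continuous_id)).continuousOn)).mul
        (hcF0.mono hsub))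
    have hint : IntervalIntegrable (fun s => -(d0 * Real.exp (-ν * s) * F0 s))
        MeasureTheory.volume a T := (hcont.neg).intervalIntegrable
    have heq := intervalIntegral.integral_eq_sub_of_hasDerivAt
      (fun s hs => hφ s (hsub hs)) hint
    rw [intervalIntegral.integral_neg, hGT] at heq
    simp only [mul_zero] at heq
    linarith
  -- integral identity for H
  have key2 : ∀ a ∈ Set.Icc (0:ℝ) T,
      Real.exp (-d0 * a) * H a = ∫ s in a..T, ν01 * Real.exp (-d0 * s) * G s := by
    intro a ha
    have hsub : Set.uIcc a T ⊆ Set.Icc 0 T := by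
      rw [Set.uIcc_of_le ha.2]; exact Set.Icc_subset_Icc ha.1 le_rfl
    have hcont : ContinuousOn (fun s => ν01 * Real.exp (-d0 * s) * G s) (Set.uIcc a T) :=
      ((continuousOn_const.mul
        ((Real.continuous_exp.comp (continuous_const.mul continuous_id)).continuousOn)).mul
        (hcG.mono hsub))
    have hint : IntervalIntegrable (fun s => -(ν01 * Real.exp (-d0 * s) * G s))
        MeasureTheory.volume a T := (hcont.neg).intervalIntegrable
    have heq := intervalIntegral.integral_eq_sub_of_hasDerivAt
      (fun s hs => hψ s (hsub hs)) hint
    rw [intervalIntegral.integral_neg, hHT] at heq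
    simp only [mul_zero] at heq
    linarith
  -- G is positive near T
  have hnearT : ∃ b < T, ∀ t ∈ Set.Ioo b T, 0 < G t := by
    have hGdT : HasDerivAt G (-d0) T := by
      have h2 : HasDerivAt G
          ((-ν10 * F0 T + ν10 * F1 T) - ((d0 + ν01) * F0 T - ν01 * F1 T)) T :=
        (hODE1 T (Set.right_mem_Icc.2 hT.le)).sub (hODE0 T (Set.right_mem_Icc.2 hT.le))
      convert h2 using 1
      rw [hterm0, hterm1]; ring
    have hslope := hasDerivAt_iff_tendsto_slope.1 hGdT
    have hev : ∀ᶠ t in nhdsWithin T {T}ᶜ, slope G T t < 0 :=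
      hslope.eventually_lt_const (by linarith)
    have hev2 : ∀ᶠ t in nhdsWithin T (Set.Iio T), slope G T t < 0 :=
      hev.filter_mono (nhdsWithin_mono T (fun x hx => ne_of_lt hx))
    rw [eventually_nhdsWithin_iff] at hev2
    obtain ⟨u, hu, huo, hTu⟩ := eventually_nhds_iff.1 hev2
    obtain ⟨b, hb, hbu⟩ := (Metric.isOpen_iff.1 huo T hTu)
    refine ⟨T - b/2, by linarith, fun t ht => ?_⟩
    have htu : t ∈ u := hbu (by
      simp only [Metric.mem_ball, Real.dist_eq, abs_lt]
      constructor <;> [linarith [ht.1, ht.2]; linarith [ht.1, ht.2]])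
    have hsl := hu t htu ht.2
    have hden : t - T < 0 := by linarith [ht.2]
    have : (G t - G T) / (t - T) < 0 := by
      simpa [slope_def_field, div_eq_iff, hden.ne] using hsl
    rw [hGT, sub_zero] at this
    rcases div_neg_iff.1 this with ⟨h1, _⟩ | ⟨_, h2⟩
    · exact h1
    · linarith
  -- main positivity of G on [0,T)
  have hGpos : ∀ t ∈ Set.Ico (0:ℝ) T, 0 < G t := by
    by_contra hcon
    push_neg at hcon
    obtain ⟨t0, ht0, hGt0⟩ := hcon
    set S := {t | t ∈ Set.Ico (0:ℝ) T ∧ G t ≤ 0} with hS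
    have hSne : S.Nonempty := ⟨t0, ht0, hGt0⟩
    have hSbdd : BddAbove S := ⟨T, fun x hx => hx.1.2.le⟩
    set c := sSup S with hc
    obtain ⟨b, hbT, hbpos⟩ := hnearT
    have hcb : c ≤ b := csSup_le hSne (by
      intro x hx
      by_contra hxb
      push_neg at hxb
      exact absurd (hbpos x ⟨hxb, hx.1.2⟩) (not_lt.2 hx.2))
    have hcT : c < T := lt_of_le_of_lt hcb hbT
    have hc0 : 0 ≤ c := ht0.1.trans (le_csSup hSbdd ⟨ht0, hGt0⟩)
    have hcIcc : c ∈ Set.Icc (0:ℝ) T := ⟨hc0, hcT.le⟩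
    -- G c ≤ 0 by continuity
    have hGc : G c ≤ 0 := by
      have hclos : c ∈ closure S := csSup_mem_closure hSne hSbdd
      obtain ⟨un, hun, hlim⟩ := mem_closure_iff_seq_limit.1 hclos
      have htend : Filter.Tendsto (fun n => G (un n)) Filter.atTop (nhds (G c)) := by
        refine ((hcG c hcIcc).tendsto).comp ?_
        exact tendsto_nhdsWithin_of_tendsto_nhds_of_eventually_within _ hlim
          (Filter.Eventually.of_forall (fun n => ⟨(hun n).1.1, (hun n).1.2.le⟩))
      exact le_of_tendsto htend (Filter.Eventually.of_forall (fun n => (hun n).2))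
    -- G positive strictly between c and T
    have hGIoo : ∀ u ∈ Set.Ioo c T, 0 < G u := by
      intro u hu
      by_contra h
      push_neg at h
      have : u ∈ S := ⟨⟨hc0.trans hu.1.le, hu.2⟩, h⟩
      exact absurd (le_csSup hSbdd this) (not_le.2 hu.1)
    -- H nonneg on (c,T)
    have hHnn : ∀ s ∈ Set.Ioo c T, 0 ≤ H s := by
      intro s hs
      have hsIcc : s ∈ Set.Icc (0:ℝ) T := ⟨hc0.trans hs.1.le, hs.2.le⟩
      have hInn : 0 ≤ ∫ u in s..T, ν01 * Real.exp (-d0 * u) * G u := by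
        apply intervalIntegral.integral_nonneg hs.2.le
        intro u hu
        have hGu : 0 ≤ G u := by
          rcases eq_or_lt_of_le hu.2 with rfl | hlt
          · exact hGT.ge
          · exact (hGIoo u ⟨hs.1.trans_le hu.1, hlt⟩).le
        positivity
      have := key2 s hsIcc
      nlinarith [Real.exp_pos (-d0 * s)]
    -- contradiction: G c > 0
    have hF0pos : ∀ s ∈ Set.Ioo c T, 0 < d0 * Real.exp (-ν * s) * F0 s := by
      intro s hs
      have : F0 s = H s + E s := by simp [hH]
      have hF0 : 0 < F0 s := by
        rw [this]; linarith [hHnn s hs, hEpos s]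
      positivity
    have hsub : Set.uIcc c T ⊆ Set.Icc 0 T := by
      rw [Set.uIcc_of_le hcT.le]; exact Set.Icc_subset_Icc hc0 le_rfl
    have hcont : ContinuousOn (fun s => d0 * Real.exp (-ν * s) * F0 s) (Set.uIcc c T) :=
      ((continuousOn_const.mul
        ((Real.continuous_exp.comp (continuous_const.mul continuous_id)).continuousOn)).mul
        (hcF0.mono hsub))
    have hIpos : 0 < ∫ s in c..T, d0 * Real.exp (-ν * s) * F0 s :=
      intervalIntegral.intervalIntegral_pos_of_pos_on hcont.intervalIntegrable hF0pos hcT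
    have := key1 c hcIcc
    nlinarith [Real.exp_pos (-ν * c)]
  -- H positive on [0,T)
  have hHpos : ∀ t ∈ Set.Ico (0:ℝ) T, 0 < H t := by
    intro t ht
    have htIcc : t ∈ Set.Icc (0:ℝ) T := ⟨ht.1, ht.2.le⟩
    have hsub : Set.uIcc t T ⊆ Set.Icc 0 T := by
      rw [Set.uIcc_of_le ht.2.le]; exact Set.Icc_subset_Icc ht.1 le_rfl
    have hcont : ContinuousOn (fun s => ν01 * Real.exp (-d0 * s) * G s) (Set.uIcc t T) :=
      ((continuousOn_const.mul
        ((Real.continuous_exp.comp (continuous_const.mul continuous_id)).continuousOn)).mul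
        (hcG.mono hsub))
    have hIpos : 0 < ∫ s in t..T, ν01 * Real.exp (-d0 * s) * G s := by
      apply intervalIntegral.intervalIntegral_pos_of_pos_on hcont.intervalIntegrable _ ht.2
      intro s hs
      have := hGpos s ⟨ht.1.trans hs.1.le, hs.2⟩
      positivity
    have := key2 t htIcc
    nlinarith [Real.exp_pos (-d0 * t)]
  intro t ht
  refine ⟨?_, ?_⟩
  · have := hGpos t ht; simp only [hG] at this; linarith
  · have := hHpos t ht; simp only [hH, hE] at this; linarith
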